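/- For a Sturmian word of slope α = [0; a_1, a_2, ...] with a_1 ≥ 2, the maximal integer power of the letter 0 occurring as a factor is 0^{a_1}; i.e., 0^{a_1} is a factor but 0^{a_1 + 1} is not. -/

import Mathlib

/-- The Gauss map iterates: `gaussIter α n` is the `n`-th complete quotient of `α`. -/
noncomputable def gaussIter (α : ℝ) : ℕ → ℝ :=
  fun n => (fun x : ℝ => (Int.fract x)⁻¹)^[n] α

/-- The partial quotients of the continued fraction expansion of `α`:
`α = [cfA α 0; cfA α 1, cfA α 2, …]`. -/
noncomputable def cfA (α : ℝ) (n : ℕ) : ℤ := ⌊gaussIter α n⌋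

/-- The denominators `q_k` of the convergents of `α`. -/
noncomputable def cfQ (α : ℝ) : ℕ → ℤ
  | 0 => 1
  | 1 => cfA α 1
  | (n + 2) => cfA α (n + 2) * cfQ α (n + 1) + cfQ α n

/-- The `n`-th letter of the standard Sturmian word of slope `α`: the coding of the orbit
of the point `α` under rotation by `α`, with `I_0 = [0, 1-α)` coding `0` and
`I_1 = [1-α, 1)` coding `1`. -/
noncomputable def sturmianLetter (α : ℝ) (n : ℕ) : ℕ :=
  if Int.fract (((n : ℝ) + 1) * α) < 1 - α then 0 else 1

/-- The language `L(α)`: `w` is a factor of the (standard) Sturmian word of slope `α`.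
(For irrational `α` this language is the same for every Sturmian word of slope `α`.) -/
noncomputable def InLang (α : ℝ) (w : List ℕ) : Prop :=
  ∃ i : ℕ, w = (List.range w.length).map (fun j => sturmianLetter α (i + j))

/-- For a Sturmian word of slope `α = [0; a_1, a_2, …]` with `a_1 ≥ 2`, the maximal power
of the letter `0` occurring as a factor is `0^(a_1)`. -/
lemma fract_add_of_lt {x c : ℝ} (hc : 0 ≤ c) (h : Int.fract x + c < 1) :
    Int.fract (x + c) = Int.fract x + c := by
  conv_lhs => rw [← Int.floor_add_fract x]
  rw [add_assoc, Int.fract_intCast_add,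
    Int.fract_eq_self.2 ⟨add_nonneg (Int.fract_nonneg x) hc, h⟩]

/-- For irrational `α` and any `ε > 0` there is `m ≥ 1` with `fract (m α) < ε`. -/
lemma exists_fract_lt (α : ℝ) (hα : Irrational α) {ε : ℝ} (hε : 0 < ε) :
    ∃ m : ℕ, 0 < m ∧ Int.fract ((m : ℝ) * α) < ε := by
  obtain ⟨n, hn⟩ := exists_nat_one_div_lt hε
  obtain ⟨j, k, hk0, hkn, hjk⟩ := Real.exists_int_int_abs_mul_sub_le α (Nat.succ_pos n)
  have hbound : |(k : ℝ) * α - j| ≤ 1 / (n + 2) := by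
    convert hjk using 2; push_cast; ring
  have h12 : (1 : ℝ) / (n + 2) ≤ 1 / 2 := by
    apply div_le_div_of_nonneg_left (by norm_num) (by norm_num)
    have : (0:ℝ) ≤ n := Nat.cast_nonneg n
    linarith
  have heps : (1 : ℝ) / (n + 2) < ε := by
    have : (1:ℝ) / (n + 2) ≤ 1 / (n + 1) := by
      apply div_le_div_of_nonneg_left (by norm_num) (by positivity)
      linarith
    linarith
  have hδirr : Irrational ((k : ℝ) * α) := hα.intCast_mul hk0.ne'
  have hδne : (k : ℝ) * α - j ≠ 0 := sub_ne_zero.2 (hδirr.ne_int j)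
  rcases hδne.lt_or_gt with hneg | hpos
  · -- k*α < j; set η = j - k*α ∈ (0, 1/(n+2)]
    set η : ℝ := (j : ℝ) - k * α with hη
    have hη0 : 0 < η := by linarith [sub_neg.mp hneg]
    have hηle : η ≤ 1 / (n + 2) := by
      have := abs_le.mp hbound
      simp only [hη]; linarith [this.1]
    have hηirr : Irrational η := (hα.intCast_mul hk0.ne').intCast_sub j
    set l : ℤ := ⌊η⁻¹⌋ with hl
    have hinv2 : (2 : ℝ) ≤ η⁻¹ := by
      rw [le_inv_comm₀ (by norm_num) hη0]
      calc η ≤ 1 / (n+2) := hηle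
        _ ≤ 1/2 := h12
        _ = 2⁻¹ := by norm_num
    have hl2 : (2 : ℤ) ≤ l := Int.le_floor.2 (by exact_mod_cast hinv2)
    have hl0 : (0 : ℤ) < l := by omega
    have hlη1 : (l : ℝ) * η ≤ 1 := by
      have h1 : (l : ℝ) ≤ η⁻¹ := Int.floor_le _
      calc (l : ℝ) * η ≤ η⁻¹ * η := by nlinarith
        _ = 1 := inv_mul_cancel₀ hη0.ne'
    have hlηne : (l : ℝ) * η ≠ 1 := by
      have : Irrational ((l : ℝ) * η) := hηirr.intCast_mul hl0.ne'
      simpa using this.ne_int 1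
    have hlηlt : (l : ℝ) * η < 1 := lt_of_le_of_ne hlη1 hlηne
    have hlη2 : 1 < ((l : ℝ) + 1) * η := by
      have h1 : η⁻¹ < (l : ℝ) + 1 := Int.lt_floor_add_one _
      have := inv_mul_cancel₀ hη0.ne'
      nlinarith
    refine ⟨(l * k).toNat, ?_, ?_⟩
    · have : (0:ℤ) < l * k := mul_pos hl0 hk0
      omega
    · have hnn : (0:ℤ) ≤ l * k := le_of_lt (mul_pos hl0 hk0)
      have hcast : ((l * k).toNat : ℝ) = (l : ℝ) * k := by
        have h1 : (((l * k).toNat : ℤ) : ℝ) = ((l * k : ℤ) : ℝ) :=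
          congrArg (fun z : ℤ => (z : ℝ)) (Int.toNat_of_nonneg hnn)
        push_cast at h1 ⊢
        rw [h1]
      rw [hcast]
      have hval : (l : ℝ) * k * α = ((l * j : ℤ) : ℝ) + (-((l:ℝ) * η)) := by
        push_cast; simp only [hη]; ring
      rw [hval, Int.fract_intCast_add]
      have hfloor : ⌊-((l:ℝ) * η)⌋ = -1 := by
        apply Int.floor_eq_iff.mpr
        constructor
        · push_cast; linarith
        · push_cast; linarith
      have hfr : Int.fract (-((l:ℝ) * η)) = 1 - (l:ℝ) * η := by
        rw [Int.fract, hfloor]; push_cast; ring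
      rw [hfr]
      linarith
  · -- k*α > j; fract (k α) = k α - j
    set δ : ℝ := (k : ℝ) * α - j with hδ
    have hδ0 : 0 < δ := sub_pos.2 (by linarith [sub_pos.mp hpos])
    have hδlt : δ < 1 := by
      have : δ ≤ 1/(n+2) := by simp only [hδ]; linarith [(abs_le.mp hbound).2]
      linarith
    refine ⟨k.toNat, by omega, ?_⟩
    have hcast : (k.toNat : ℝ) = (k : ℝ) := by
      exact_mod_cast congrArg (fun z : ℤ => (z : ℝ)) (Int.toNat_of_nonneg hk0.le)
    rw [hcast]
    have : (k : ℝ) * α = (j : ℝ) + δ := by simp [hδ]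
    rw [this, Int.fract_intCast_add, Int.fract_eq_self.2 ⟨hδ0.le, hδlt⟩]
    calc δ ≤ 1/(n+2) := by linarith [(abs_le.mp hbound).2]
      _ < ε := heps

lemma letter_zero_iff (α : ℝ) (n : ℕ) :
    sturmianLetter α n = 0 ↔ Int.fract (((n : ℝ) + 1) * α) < 1 - α := by
  unfold sturmianLetter
  split <;> simp [*]

/-- Stepping lemma: as long as fractional parts stay below 1, they accumulate linearly. -/
lemma fract_run (α : ℝ) (h0 : 0 < α) (m : ℕ) :
    ∀ j : ℕ, Int.fract ((m : ℝ) * α) + (j : ℝ) * α < 1 →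
      Int.fract (((m + j : ℕ) : ℝ) * α) = Int.fract ((m : ℝ) * α) + (j : ℝ) * α := by
  intro j
  induction j with
  | zero => intro _; simp
  | succ j ih =>
    intro h
    have hj : Int.fract ((m : ℝ) * α) + (j : ℝ) * α < 1 := by
      push_cast at h; nlinarith
    have hstep : ((m + (j+1) : ℕ) : ℝ) * α = ((m + j : ℕ) : ℝ) * α + α := by
      push_cast; ring
    rw [hstep, fract_add_of_lt h0.le (by rw [ih hj]; push_cast at h ⊢; linarith)]
    rw [ih hj]; push_cast; ring

theorem max_zero_block (α : ℝ) (hα : Irrational α) (h0 : 0 < α) (h2 : α < 1 / 2) :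
    InLang α (List.replicate (cfA α 1).toNat 0) ∧
      ¬ InLang α (List.replicate ((cfA α 1).toNat + 1) 0) := by
  have hα1 : α < 1 := by linarith
  have hfr : Int.fract α = α := Int.fract_eq_self.2 ⟨h0.le, hα1⟩
  have hcf : cfA α 1 = ⌊α⁻¹⌋ := by
    simp [cfA, gaussIter, Function.iterate_one, hfr]
  have hmul : α * α⁻¹ = 1 := mul_inv_cancel₀ h0.ne'
  have hinv2 : (2 : ℝ) < α⁻¹ := by nlinarith
  have ha2 : (2 : ℤ) ≤ ⌊α⁻¹⌋ := Int.le_floor.2 (by exact_mod_cast hinv2.le)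
  set A : ℕ := (cfA α 1).toNat with hA
  have hAcast : (A : ℝ) = (⌊α⁻¹⌋ : ℝ) := by
    rw [hA, hcf]
    exact_mod_cast congrArg (fun z : ℤ => (z : ℝ)) (Int.toNat_of_nonneg (by omega))
  have hA2 : 2 ≤ A := by rw [hA, hcf]; omega
  have hAle : (A : ℝ) * α ≤ 1 := by
    have := Int.floor_le α⁻¹
    rw [← hAcast] at this
    nlinarith
  have hAne : (A : ℝ) * α ≠ 1 := by
    have hAz : (A : ℤ) ≠ 0 := by omega
    have hirr : Irrational (((A : ℤ) : ℝ) * α) := hα.intCast_mul hAz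
    have h1 := hirr.ne_int 1
    push_cast at h1 ⊢
    simpa using h1
  have hAlt : (A : ℝ) * α < 1 := lt_of_le_of_ne hAle hAne
  have hA1gt : 1 < ((A : ℝ) + 1) * α := by
    have := Int.lt_floor_add_one α⁻¹
    rw [← hAcast] at this
    nlinarith
  constructor
  · -- existence of 0^A
    obtain ⟨m, hm0, hmfr⟩ := exists_fract_lt α hα (ε := 1 - (A : ℝ) * α) (by linarith)
    refine ⟨m - 1, ?_⟩
    symm
    rw [List.length_replicate]
    apply List.eq_replicate_iff.2
    refine ⟨by simp, ?_⟩
    intro b hb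
    obtain ⟨j, hj, rfl⟩ := List.mem_map.mp hb
    rw [List.mem_range] at hj
    rw [letter_zero_iff]
    have hn : ((m - 1 + j : ℕ) : ℝ) + 1 = ((m + j : ℕ) : ℝ) := by
      have h' : m - 1 + j + 1 = m + j := by omega
      calc ((m - 1 + j : ℕ) : ℝ) + 1 = ((m - 1 + j + 1 : ℕ) : ℝ) := by push_cast; ring
        _ = ((m + j : ℕ) : ℝ) := by rw [h']
    have hjA : (j : ℝ) + 1 ≤ (A : ℝ) := by exact_mod_cast hj
    have hpre : Int.fract ((m : ℝ) * α) + (j : ℝ) * α < 1 := by nlinarith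
    rw [hn, fract_run α h0 m j hpre]
    nlinarith
  · -- no 0^(A+1)
    rintro ⟨i, hw⟩
    have hrep := (List.eq_replicate_iff.mp hw.symm).2
    have hletter : ∀ j : ℕ, j < A + 1 → sturmianLetter α (i + j) = 0 := by
      intro j hjlt
      apply hrep
      apply List.mem_map.mpr
      refine ⟨j, ?_, rfl⟩
      rw [List.mem_range, List.length_replicate]
      exact hjlt
    have hlt : ∀ j : ℕ, j < A + 1 → Int.fract (((i + 1 + j : ℕ) : ℝ) * α) < 1 - α := by
      intro j hjlt
      have h := (letter_zero_iff α (i + j)).mp (hletter j hjlt)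
      have : ((i + j : ℕ) : ℝ) + 1 = ((i + 1 + j : ℕ) : ℝ) := by push_cast; ring
      rwa [this] at h
    have key : ∀ j : ℕ, j ≤ A →
        Int.fract (((i + 1 + j : ℕ) : ℝ) * α) =
          Int.fract (((i + 1 : ℕ) : ℝ) * α) + (j : ℝ) * α := by
      intro j
      induction j with
      | zero => intro _; simp
      | succ j ih =>
        intro hjle
        have hj' : j ≤ A := by omega
        have hltj : Int.fract (((i + 1 + j : ℕ) : ℝ) * α) < 1 - α := hlt j (by omega)
        have hstep : ((i + 1 + (j + 1) : ℕ) : ℝ) * α = ((i + 1 + j : ℕ) : ℝ) * α + α := by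
          push_cast; ring
        rw [hstep, fract_add_of_lt h0.le (by linarith), ih hj']
        push_cast; ring
    have hfin : Int.fract (((i + 1 + A : ℕ) : ℝ) * α) < 1 - α := hlt A (by omega)
    rw [key A le_rfl] at hfin
    have hnn : 0 ≤ Int.fract (((i + 1 : ℕ) : ℝ) * α) := Int.fract_nonneg _
    have hexp : ((A : ℝ) + 1) * α = (A : ℝ) * α + α := by ring
    linarith
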